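/- Both K5 and K_{3,3} admit embeddings in the torus in which, for any chosen pair of vertices x and y, some face contains x and y each twice in the alternating cyclic order x, y, x, y. -/

import Mathlib

open SimpleGraph

namespace AltPaper

variable {V : Type*} {W : Type*} {U : Type*}

/-- The dart-reversal permutation of a graph. -/
def dartRev (G : SimpleGraph V) : Equiv.Perm G.Dart :=
  Function.Involutive.toPerm SimpleGraph.Dart.symm SimpleGraph.Dart.symm_involutive

/-- A combinatorial embedding of `G` into an orientable surface, given by a rotation system:
a permutation of the darts whose orbits are exactly the stars of the vertices. -/
structure RotSys (G : SimpleGraph V) where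
  rot : Equiv.Perm G.Dart
  fst_rot : ∀ d : G.Dart, (rot d).fst = d.fst
  orbit_full : ∀ d d' : G.Dart, d.fst = d'.fst → ∃ n : ℕ, (rot ^ n) d = d'

namespace RotSys

variable {G : SimpleGraph V}

/-- The face-tracing permutation of the rotation system. -/
def facePerm (R : RotSys G) : Equiv.Perm G.Dart := (dartRev G).trans R.rot

/-- The number of faces of the embedding: the number of orbits of the face permutation. -/
noncomputable def numFaces (R : RotSys G) : ℕ :=
  Nat.card (MulAction.orbitRel.Quotient (Subgroup.zpowers R.facePerm) G.Dart)

/-- The number of non-isolated vertices: orbits of the rotation. -/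
noncomputable def numVerts (R : RotSys G) : ℕ :=
  Nat.card (MulAction.orbitRel.Quotient (Subgroup.zpowers R.rot) G.Dart)

/-- The number of connected components containing at least one edge. -/
noncomputable def numComps (R : RotSys G) : ℕ :=
  Nat.card (MulAction.orbitRel.Quotient (Subgroup.closure {R.rot, dartRev G}) G.Dart)

/-- By Euler's formula, the (total, orientable) genus of the embedding `R` is at most `k`.
Isolated vertices are irrelevant for the genus and are ignored. -/
noncomputable def genusLE (R : RotSys G) (k : ℕ) : Prop :=
  2 * R.numComps + Nat.card G.edgeSet ≤ 2 * k + R.numFaces + R.numVerts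

/-- Vertices `v₁ v₂ v₃ v₄` appear (in this cyclic order) on a common face of `R`. -/
def cyclicOrderedFace (R : RotSys G) (v₁ v₂ v₃ v₄ : V) : Prop :=
  ∃ (d : G.Dart) (a b c : ℕ), 0 < a ∧ a < b ∧ b < c ∧
    c < Function.minimalPeriod (⇑R.facePerm) d ∧
    d.fst = v₁ ∧ ((R.facePerm ^ a) d).fst = v₂ ∧ ((R.facePerm ^ b) d).fst = v₃ ∧
    ((R.facePerm ^ c) d).fst = v₄

/-- There is a face of `R` in which `x` and `y` appear (at least) twice, in the alternating
cyclic order `x, y, x, y`. -/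
def altFace (R : RotSys G) (x y : V) : Prop := R.cyclicOrderedFace x y x y

/-- `u` and `v` lie on a common face of `R`. -/
def Cofacial (R : RotSys G) (u v : V) : Prop :=
  ∃ (d : G.Dart) (n : ℕ), d.fst = u ∧ ((R.facePerm ^ n) d).fst = v

/-- All vertices of `s` lie on a common face of `R`. -/
def CofacialSet (R : RotSys G) (s : Set V) : Prop :=
  ∃ d : G.Dart, ∀ v ∈ s, ∃ n : ℕ, ((R.facePerm ^ n) d).fst = v

end RotSys

/-- `G` embeds in the orientable surface of genus `k`. -/
def GenusLE (G : SimpleGraph V) (k : ℕ) : Prop := ∃ R : RotSys G, R.genusLE k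

/-- `G` has an embedding in the orientable surface of genus `k` with a face in which the
vertices `x` and `y` appear twice, in alternating cyclic order. -/
def AltEmb (G : SimpleGraph V) (x y : V) (k : ℕ) : Prop :=
  ∃ R : RotSys G, R.genusLE k ∧ R.altFace x y

end AltPaper
namespace AltPaper

variable {V : Type*} {W : Type*} {U : Type*}

/-- A combinatorial embedding of `G` into a (possibly non-orientable) surface:
a rotation system together with a signature on the edges. -/
structure SRS (G : SimpleGraph V) where
  rot : Equiv.Perm G.Dart
  fst_rot : ∀ d : G.Dart, (rot d).fst = d.fst
  orbit_full : ∀ d d' : G.Dart, d.fst = d'.fst → ∃ n : ℕ, (rot ^ n) d = d'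
  sign : Sym2 V → Bool

namespace SRS

variable {G : SimpleGraph V}

/-- Auxiliary involution used in signed face tracing: reverse the dart and update the side. -/
def flip (S : SRS G) : Equiv.Perm (G.Dart × Bool) :=
  Function.Involutive.toPerm (fun p => (p.1.symm, xor p.2 (S.sign p.1.edge)))
    (by
      rintro ⟨d, s⟩
      have h1 : d.symm.symm = d := SimpleGraph.Dart.symm_involutive d
      have h2 : d.symm.edge = d.edge := SimpleGraph.Dart.edge_symm d
      simp [h1, h2, Bool.xor_assoc])

/-- Auxiliary permutation used in signed face tracing: apply the rotation forwards or
backwards according to the current side. -/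
def rotPm (S : SRS G) : Equiv.Perm (G.Dart × Bool) where
  toFun p := (cond p.2 (S.rot p.1) (S.rot.symm p.1), p.2)
  invFun p := (cond p.2 (S.rot.symm p.1) (S.rot p.1), p.2)
  left_inv := by rintro ⟨d, (_ | _)⟩ <;> simp
  right_inv := by rintro ⟨d, (_ | _)⟩ <;> simp

/-- The signed face-tracing permutation, acting on sided darts. -/
def facePerm (S : SRS G) : Equiv.Perm (G.Dart × Bool) := (S.flip).trans (S.rotPm)

/-- Twice the number of faces (each face is traced once on each side). -/
noncomputable def numFaces2 (S : SRS G) : ℕ :=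
  Nat.card (MulAction.orbitRel.Quotient (Subgroup.zpowers S.facePerm) (G.Dart × Bool))

noncomputable def numVerts (S : SRS G) : ℕ :=
  Nat.card (MulAction.orbitRel.Quotient (Subgroup.zpowers S.rot) G.Dart)

noncomputable def numComps (S : SRS G) : ℕ :=
  Nat.card (MulAction.orbitRel.Quotient (Subgroup.closure {S.rot, dartRev G}) G.Dart)

/-- Twice the (total) Euler genus of the embedding, via Euler's formula. -/
noncomputable def eulerGenus2 (S : SRS G) : ℤ :=
  4 * S.numComps - 2 * S.numVerts + 2 * Nat.card G.edgeSet - S.numFaces2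

/-- The Euler genus of the embedding is at most `h`. -/
noncomputable def eulerGenusLE (S : SRS G) (h : ℕ) : Prop := S.eulerGenus2 ≤ 2 * h

/-- The sided darts `p` and `q` lie on the same face. -/
def SameFace (S : SRS G) (p q : G.Dart × Bool) : Prop := ∃ n : ℤ, (S.facePerm ^ n) p = q

/-- The set of darts of the facial walk of the face of `p`. -/
def faceDarts (S : SRS G) (p : G.Dart × Bool) : Set G.Dart :=
  {d | ∃ q, S.SameFace p q ∧ q.1 = d}

/-- The vertex `v` appears on the facial walk of the face of `p`. -/
def vertexOnFace (S : SRS G) (p : G.Dart × Bool) (v : V) : Prop :=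
  ∃ d ∈ S.faceDarts p, d.fst = v

/-- The facial walk of the face of `p` visits `x` and `y` in alternating cyclic order
`x, y, x, y`. -/
def altFaceS (S : SRS G) (p : G.Dart × Bool) (x y : V) : Prop :=
  ∃ (a b c : ℕ), 0 < a ∧ a < b ∧ b < c ∧
    c < Function.minimalPeriod (⇑S.facePerm) p ∧
    p.1.fst = x ∧ ((S.facePerm ^ a) p).1.fst = y ∧ ((S.facePerm ^ b) p).1.fst = x ∧
    ((S.facePerm ^ c) p).1.fst = y

end SRS

/-- `G` embeds in the projective plane. -/
def ProjPlanar (G : SimpleGraph V) : Prop := ∃ S : SRS G, S.eulerGenusLE 1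

end AltPaper
namespace AltPaper

variable {V : Type*} {W : Type*} {U : Type*}

/-! ### The multigraph obtained by identifying two vertices, and its planar embeddings -/

/-- The darts of the multigraph `Ĥ` obtained from `G` by identifying `x` and `y`
(deleting the edge `xy` first, if present). -/
def PD (G : SimpleGraph V) (x y : V) : Type _ := {d : G.Dart // d.edge ≠ s(x, y)}

/-- The source vertex of a dart of `Ĥ`: the identified vertex `v_{xy}` is represented by `x`. -/
def psrc (G : SimpleGraph V) (x y : V) [DecidableEq V] (d : PD G x y) : V :=
  if d.val.fst = y then x else d.val.fst

/-- Dart reversal in `Ĥ`. -/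
def prev (G : SimpleGraph V) (x y : V) : Equiv.Perm (PD G x y) :=
  Function.Involutive.toPerm
    (fun d => ⟨d.val.symm, by rw [SimpleGraph.Dart.edge_symm]; exact d.prop⟩)
    (by
      rintro ⟨d, hd⟩
      exact Subtype.ext (SimpleGraph.Dart.symm_involutive d))

/-- A combinatorial embedding (in an orientable surface) of the multigraph `Ĥ` obtained from
`G` by identifying `x` and `y` into the vertex `v_{xy}` (loops are discarded). -/
structure PinchRS (G : SimpleGraph V) (x y : V) [DecidableEq V] where
  rot : Equiv.Perm (PD G x y)
  src_rot : ∀ d, psrc G x y (rot d) = psrc G x y d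
  orbit_full : ∀ d d', psrc G x y d = psrc G x y d' → ∃ n : ℕ, (rot ^ n) d = d'

namespace PinchRS

variable [DecidableEq V] {G : SimpleGraph V} {x y : V}

def facePerm (P : PinchRS G x y) : Equiv.Perm (PD G x y) := (prev G x y).trans P.rot

noncomputable def numFaces (P : PinchRS G x y) : ℕ :=
  Nat.card (MulAction.orbitRel.Quotient (Subgroup.zpowers P.facePerm) (PD G x y))

noncomputable def numVerts (P : PinchRS G x y) : ℕ :=
  Nat.card (MulAction.orbitRel.Quotient (Subgroup.zpowers P.rot) (PD G x y))

noncomputable def numComps (P : PinchRS G x y) : ℕ :=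
  Nat.card (MulAction.orbitRel.Quotient (Subgroup.closure {P.rot, prev G x y}) (PD G x y))

/-- The embedding `P` of `Ĥ` is planar (Euler's formula; the dart count is twice the
edge count). -/
noncomputable def Planar (P : PinchRS G x y) : Prop :=
  4 * P.numComps + Nat.card (PD G x y) ≤ 2 * P.numFaces + 2 * P.numVerts

/-- The number of label transitions in the cyclic sequence of labels around the identified
vertex `v_{xy}`: a dart incident with `v_{xy}` is labelled `X` when it comes from `x`. -/
noncomputable def pinchTrans (P : PinchRS G x y) : ℕ :=
  Nat.card {d : PD G x y // psrc G x y d = x ∧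
    ¬ ((d.val.fst = x) ↔ ((P.rot d).val.fst = x))}

end PinchRS

/-! ### Splitting the two terminals -/

/-- The projection recording that `Sum.inr false` is the second copy of `x` and
`Sum.inr true` is the second copy of `y` (while `Sum.inl x`, `Sum.inl y` are the first
copies). -/
def splitProj (x y : V) : V ⊕ Bool → V
  | Sum.inl v => v
  | Sum.inr false => x
  | Sum.inr true => y

/-- `G'` is obtained from `G` by splitting `x` into `x₁ = Sum.inl x`, `x₂ = Sum.inr false`
and `y` into `y₁ = Sum.inl y`, `y₂ = Sum.inr true`, distributing the incident edges. -/
def IsSplitAt (G : SimpleGraph V) (x y : V) (G' : SimpleGraph (V ⊕ Bool)) : Prop :=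
  (∀ a b, G'.Adj a b → G.Adj (splitProj x y a) (splitProj x y b)) ∧
  (∀ u v, G.Adj u v → ∃ a b, G'.Adj a b ∧ splitProj x y a = u ∧ splitProj x y b = v) ∧
  (∀ a b a' b', G'.Adj a b → G'.Adj a' b' →
    splitProj x y a = splitProj x y a' → splitProj x y b = splitProj x y b' → a = a' ∧ b = b')

/-- The simple graph `G/xy` obtained from `G` by identifying `x` and `y` (the edge `xy`,
if present, is deleted first, and multiple edges are merged); the merged vertex is `x`,
and `y` becomes isolated. -/
def pinch (G : SimpleGraph V) (x y : V) : SimpleGraph V :=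
  SimpleGraph.fromRel (fun a b => a ≠ y ∧ b ≠ y ∧
    ∃ a' b', G.Adj a' b' ∧ (a' = a ∨ (a' = y ∧ a = x)) ∧ (b' = b ∨ (b' = y ∧ b = x)))

/-- The graph `G*`: the `xy`-sum of `G` with a copy of `K₅` minus an edge, the two ends of
the deleted edge being identified with `x` and `y`. -/
def Gstar (G : SimpleGraph V) (x y : V) : SimpleGraph (V ⊕ Fin 3) :=
  SimpleGraph.fromRel (fun a b =>
    (∃ u v, a = Sum.inl u ∧ b = Sum.inl v ∧ G.Adj u v) ∨
    (∃ i j : Fin 3, a = Sum.inr i ∧ b = Sum.inr j) ∨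
    (∃ i : Fin 3, a = Sum.inr i ∧ (b = Sum.inl x ∨ b = Sum.inl y)))

/-- The two-terminal graph corresponding to an `XY`-labelled graph `H`:
add the terminal `x = Sum.inr false` joined to all `X`-labelled vertices and the terminal
`y = Sum.inr true` joined to all `Y`-labelled vertices. -/
def termGraph (H : SimpleGraph W) (lX lY : W → Prop) : SimpleGraph (W ⊕ Bool) :=
  SimpleGraph.fromRel (fun a b =>
    (∃ u v, a = Sum.inl u ∧ b = Sum.inl v ∧ H.Adj u v) ∨
    (∃ u, a = Sum.inr false ∧ b = Sum.inl u ∧ lX u) ∨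
    (∃ u, a = Sum.inr true ∧ b = Sum.inl u ∧ lY u))

/-- Identification map used for `xy`-sums: `w₁ ↦ u₁`, `w₂ ↦ u₂`. -/
def sumRho [DecidableEq W] (u₁ u₂ : U) (w₁ w₂ : W) : W → U ⊕ W := fun w =>
  if w = w₁ then Sum.inl u₁ else if w = w₂ then Sum.inl u₂ else Sum.inr w

/-- The `xy`-sum of `H₁` (with terminals `u₁, u₂`) and `H₂` (with terminals `w₁, w₂`):
their union after identifying `u₁` with `w₁` and `u₂` with `w₂`; the edge between the two
identified vertices is deleted even if present in a summand. -/
def xySum [DecidableEq W] (H₁ : SimpleGraph U) (u₁ u₂ : U)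
    (H₂ : SimpleGraph W) (w₁ w₂ : W) : SimpleGraph (U ⊕ W) :=
  SimpleGraph.fromRel (fun p q => s(p, q) ≠ s(Sum.inl u₁, Sum.inl u₂) ∧
    ((∃ a b, p = Sum.inl a ∧ q = Sum.inl b ∧ H₁.Adj a b) ∨
     (∃ a b, H₂.Adj a b ∧ p = sumRho u₁ u₂ w₁ w₂ a ∧ q = sumRho u₁ u₂ w₁ w₂ b)))

/-! ### Subdivisions -/

/-- A subdivision of `K` contained in `G`: branch vertices are given by the injection `f`,
branches are internally disjoint paths avoiding the branch vertices. -/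
structure SubdivisionEmb (K : SimpleGraph U) (G : SimpleGraph V) where
  f : U → V
  inj : Function.Injective f
  walk : ∀ {a b : U}, K.Adj a b → G.Walk (f a) (f b)
  isPath : ∀ {a b : U} (h : K.Adj a b), (walk h).IsPath
  symmCompat : ∀ {a b : U} (h : K.Adj a b), walk h.symm = (walk h).reverse
  internal_disj : ∀ {a b c d : U} (h₁ : K.Adj a b) (h₂ : K.Adj c d), s(a, b) ≠ s(c, d) →
    ∀ v, v ∈ (walk h₁).support → v ∈ (walk h₂).support →
      (v = f a ∨ v = f b) ∧ (v = f c ∨ v = f d)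
  branch_only : ∀ {a b : U} (h : K.Adj a b) (u : U), f u ∈ (walk h).support → u = a ∨ u = b

/-- The set of vertices of the subdivision. -/
def SubSupport {K : SimpleGraph U} {G : SimpleGraph V} (s : SubdivisionEmb K G) : Set V :=
  {v | ∃ (a b : U) (h : K.Adj a b), v ∈ (s.walk h).support}

/-- The set of edges of the subdivision. -/
def SubEdges {K : SimpleGraph U} {G : SimpleGraph V} (s : SubdivisionEmb K G) : Set (Sym2 V) :=
  {e | ∃ (a b : U) (h : K.Adj a b), e ∈ (s.walk h).edges}

/-! ### Blocks -/

/-- `B` is a block of `H`: a maximal connected vertex set without cutvertex. -/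
def IsBlock (H : SimpleGraph W) (B : Set W) : Prop :=
  B.Nonempty ∧ (H.induce B).Preconnected ∧ (∀ v : W, (H.induce (B \ {v})).Preconnected) ∧
  ∀ B' : Set W, B ⊆ B' →
    ((H.induce B').Preconnected ∧ ∀ v : W, (H.induce (B' \ {v})).Preconnected) → B' = B

/-! ### Bridges of a cycle -/

/-- The `C`-bridge generated by a set `K` of vertices (the component) : `K` together with
all edges leaving `K` and their endpoints. -/
def bridgeOf (G : SimpleGraph V) (K : Set V) : G.Subgraph where
  verts := K ∪ {v | ∃ u ∈ K, G.Adj u v}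
  Adj a b := G.Adj a b ∧ (a ∈ K ∨ b ∈ K)
  adj_sub h := h.1
  edge_vert := by
    rintro a b ⟨h, ha | hb⟩
    · exact Or.inl ha
    · exact Or.inr ⟨b, hb, h.symm⟩
  symm := by
    refine ⟨?_⟩
    rintro a b ⟨h, hab⟩
    exact ⟨h.symm, hab.symm⟩

/-- `B` is a `C`-bridge in `G`, for a closed walk `C`: either a chord of `C`, or a connected
component of `G - V(C)` together with all edges joining it to `C`. -/
def IsCBridge {r : V} (G : SimpleGraph V) (C : G.Walk r r) (B : G.Subgraph) : Prop :=
  (∃ (a b : V) (h : G.Adj a b), a ∈ C.support ∧ b ∈ C.support ∧ s(a, b) ∉ C.edges ∧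
      B = G.subgraphOfAdj h) ∨
  (∃ c : (G.induce {v | v ∉ C.support}).ConnectedComponent,
      B = bridgeOf G (Subtype.val '' c.supp))

/-- The attachments of a `C`-bridge `B`. -/
def attachments {G : SimpleGraph V} {r : V} (C : G.Walk r r) (B : G.Subgraph) : Set V :=
  B.verts ∩ {v | v ∈ C.support}

/-- The vertex set of the segment `C[u,v]` of the closed walk `C` from `u` to `v` (in the
orientation of `C`). -/
def segSet [DecidableEq V] {r : V} (G : SimpleGraph V) (C : G.Walk r r) (u v : V) : Set V :=
  {w | ∃ (hu : u ∈ C.support) (hv : v ∈ (C.rotate u hu).support),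
    w ∈ ((C.rotate u hu).takeUntil v hv).support}

/-- Two `C`-bridges avoid each other. -/
def Avoid [DecidableEq V] {r : V} (G : SimpleGraph V) (C : G.Walk r r)
    (B₁ B₂ : G.Subgraph) : Prop :=
  ∃ u v, u ∈ C.support ∧ v ∈ C.support ∧
    attachments C B₁ ⊆ segSet G C u v ∧ attachments C B₂ ⊆ segSet G C v u

/-- Two `C`-bridges overlap. -/
def Overlap [DecidableEq V] {r : V} (G : SimpleGraph V) (C : G.Walk r r)
    (B₁ B₂ : G.Subgraph) : Prop := ¬ Avoid G C B₁ B₂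

/-! ### The classes `A^k_{xy}` and their obstructions -/

/-- Contraction of the edge `uv` of `G`: `v` is merged into `u` (and becomes isolated). -/
def contractEdge (G : SimpleGraph V) (u v : V) : SimpleGraph V :=
  SimpleGraph.fromRel (fun a b => a ≠ v ∧ b ≠ v ∧
    (G.Adj a b ∨ (a = u ∧ G.Adj v b) ∨ (b = u ∧ G.Adj a v)))

/-- The class `A^k_{xy}`: `G` embeds in the orientable surface of genus `k-1`, or `G` is
`xy`-alternating on the orientable surface of genus `k`. -/
def Akxy (G : SimpleGraph V) (x y : V) (k : ℕ) : Prop :=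
  GenusLE G (k - 1) ∨ AltEmb G x y k

/-- `G` (with terminals `x, y`) is an obstruction for the class `A^k_{xy}`: it is not in the
class, but every deletion and every allowed contraction (one which does not identify the two
terminals) is. -/
def MinimalNotAk (G : SimpleGraph V) (x y : V) (k : ℕ) : Prop :=
  ¬ Akxy G x y k ∧
  (∀ e ∈ G.edgeSet, Akxy (G.deleteEdges {e}) x y k) ∧
  (∀ u v, G.Adj u v → v ≠ x → v ≠ y → Akxy (contractEdge G u v) x y k)

/-! ### Cyclic label sequences -/

/-- The number of transitions between consecutive entries of a list. -/
def listTrans (w : List Bool) : ℕ := ((w.zip w.tail).filter (fun p => p.1 ≠ p.2)).length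

/-- The number of transitions of a list, viewed as a cyclic sequence. -/
def cycTrans : List Bool → ℕ
  | [] => 0
  | a :: t => listTrans ((a :: t) ++ [a])

/-- The cyclic sequence of labelled vertices (labels are subsets of `{X, Y}`, with
`true = X`, `false = Y`) contains six distinct vertices, in this cyclic order or its
reverse, whose labels contain `X, Y, X, Y, X, Y` respectively. -/
def HasXYXYXY (n : ℕ) (lab : ZMod (n + 1) → Finset Bool) : Prop :=
  ∃ (s : ZMod (n + 1)) (a : Fin 6 → ℕ) (ε : Bool), StrictMono a ∧ a 5 ≤ n ∧
    ∀ k : Fin 6, (decide (k.val % 2 = 0)) ∈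
      lab (s + (if ε then ((a k : ℕ) : ZMod (n + 1)) else -((a k : ℕ) : ZMod (n + 1))))

/-- `L` arranges the labels of each vertex of the cyclic sequence into a list (each label
used exactly once). -/
def IsArrangement (n : ℕ) (lab : ZMod (n + 1) → Finset Bool)
    (L : ZMod (n + 1) → List Bool) : Prop :=
  ∀ i, (L i).Nodup ∧ (L i).toFinset = lab i

/-- The cyclic label sequence obtained by concatenating the arranged labels in the cyclic
order of the vertices. -/
def arranged (n : ℕ) (L : ZMod (n + 1) → List Bool) : List Bool :=
  (List.ofFn (fun j : Fin (n + 1) => L ((j : ℕ) : ZMod (n + 1)))).flatten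

end AltPaper

set_option maxHeartbeats 4000000

namespace AltPaper

section Counting

variable {α : Type*} {β : Type*}

lemma card_quot_conj (φ : Equiv.Perm α) (H : Subgroup (Equiv.Perm α)) :
    Nat.card (MulAction.orbitRel.Quotient (H.map (MulAut.conj φ).toMonoidHom) α)
      = Nat.card (MulAction.orbitRel.Quotient H α) := by
  refine Nat.card_congr (Quotient.congr φ.symm ?_)
  intro a b
  simp only [MulAction.orbitRel_apply, MulAction.mem_orbit_iff, Subtype.exists,
    Subgroup.mem_map, MulEquiv.coe_toMonoidHom, MulAut.conj_apply, Equiv.Perm.smul_def,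
    exists_prop, Subgroup.mk_smul]
  constructor
  · rintro ⟨g, ⟨k, hk, rfl⟩, h⟩
    refine ⟨k, hk, ?_⟩
    have := congrArg φ.symm h
    simpa [Equiv.Perm.mul_apply] using this
  · rintro ⟨k, hk, h⟩
    refine ⟨φ * k * φ⁻¹, ⟨k, hk, rfl⟩, ?_⟩
    have := congrArg φ h
    simpa [Equiv.Perm.mul_apply] using this

lemma isPeriodicPt_conj {φ f : Equiv.Perm α} {n : ℕ} {d : α}
    (h : Function.IsPeriodicPt (⇑f) n d) :
    Function.IsPeriodicPt (⇑(φ * f * φ⁻¹)) n (φ d) := by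
  have key : (⇑(φ * f * φ⁻¹))^[n] (φ d) = φ ((⇑f)^[n] d) := by
    rw [← Equiv.Perm.coe_pow, ← Equiv.Perm.coe_pow]
    have : (φ * f * φ⁻¹) ^ n = φ * f ^ n * φ⁻¹ := by
      simpa [MulAut.conj_apply] using (map_pow (MulAut.conj φ) f n).symm
    simp [this, Equiv.Perm.mul_apply]
  unfold Function.IsPeriodicPt Function.IsFixedPt at h ⊢
  rw [key, h]

lemma minimalPeriod_conj_le (φ f : Equiv.Perm α) (d : α) :
    Function.minimalPeriod (⇑(φ * f * φ⁻¹)) (φ d) ≤ Function.minimalPeriod (⇑f) d := by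
  rcases Nat.eq_zero_or_pos (Function.minimalPeriod (⇑f) d) with h | h
  · rw [h]
    by_contra hc
    have hpos : 0 < Function.minimalPeriod (⇑(φ * f * φ⁻¹)) (φ d) := by omega
    have hp : Function.IsPeriodicPt (⇑(φ * f * φ⁻¹))
        (Function.minimalPeriod (⇑(φ * f * φ⁻¹)) (φ d)) (φ d) :=
      Function.isPeriodicPt_minimalPeriod _ _
    have : Function.IsPeriodicPt (⇑f)
        (Function.minimalPeriod (⇑(φ * f * φ⁻¹)) (φ d)) d := by
      have := isPeriodicPt_conj (φ := φ⁻¹) hp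
      simpa [mul_assoc] using this
    have := this.minimalPeriod_pos hpos
    omega
  · exact (isPeriodicPt_conj (Function.isPeriodicPt_minimalPeriod _ _)).minimalPeriod_le h

lemma minimalPeriod_conj (φ f : Equiv.Perm α) (d : α) :
    Function.minimalPeriod (⇑(φ * f * φ⁻¹)) (φ d) = Function.minimalPeriod (⇑f) d := by
  refine le_antisymm (minimalPeriod_conj_le φ f d) ?_
  have := minimalPeriod_conj_le φ⁻¹ (φ * f * φ⁻¹) (φ d)
  simpa [mul_assoc] using this

lemma le_card_orbitQuot [Finite α] (f : Equiv.Perm α) (F : α → β)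
    (hF : ∀ d, F (f d) = F d) (hs : Function.Surjective F) :
    Nat.card β ≤ Nat.card (MulAction.orbitRel.Quotient (Subgroup.zpowers f) α) := by
  have hN : ∀ (n : ℕ) (d : α), F ((f ^ n) d) = F d := by
    intro n
    induction n with
    | zero => intro d; simp
    | succ n ih =>
        intro d
        rw [pow_succ, Equiv.Perm.mul_apply, ih (f d), hF d]
  have hZ : ∀ (n : ℤ) (d : α), F ((f ^ n) d) = F d := by
    intro n d
    cases n with
    | ofNat n => simpa using hN n d
    | negSucc n =>
        rw [zpow_negSucc]
        have := hN (n + 1) ((f ^ (n + 1))⁻¹ d)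
        rw [← Equiv.Perm.mul_apply, mul_inv_cancel, Equiv.Perm.one_apply] at this
        exact this.symm
  have hsound : ∀ a b : α,
      MulAction.orbitRel (Subgroup.zpowers f) α a b → F a = F b := by
    intro a b hab
    rw [MulAction.orbitRel_apply, MulAction.mem_orbit_iff] at hab
    obtain ⟨⟨g, hg⟩, h⟩ := hab
    obtain ⟨n, rfl⟩ := Subgroup.mem_zpowers_iff.mp hg
    rw [← h]
    exact hZ n b
  refine Nat.card_le_card_of_surjective (Quotient.lift F hsound) ?_
  intro yv
  obtain ⟨xv, hxv⟩ := hs yv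
  exact ⟨Quotient.mk _ xv, hxv⟩

lemma card_orbitQuot_le_one (H : Subgroup (Equiv.Perm α)) (d0 : α)
    (h : ∀ d : α, ∃ g ∈ H, g d0 = d) :
    Nat.card (MulAction.orbitRel.Quotient H α) ≤ 1 := by
  have key : ∀ d : α, (Quotient.mk _ d : MulAction.orbitRel.Quotient H α)
      = Quotient.mk _ d0 := by
    intro d
    obtain ⟨g, hg, hgd⟩ := h d
    refine Quotient.sound ((MulAction.orbitRel_apply).mpr
      (MulAction.mem_orbit_iff.mpr ⟨⟨g, hg⟩, hgd⟩))
  have hss : ∀ a b : MulAction.orbitRel.Quotient H α, a = b := by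
    intro a b
    obtain ⟨xv, rfl⟩ := Quotient.exists_rep a
    obtain ⟨yv, rfl⟩ := Quotient.exists_rep b
    rw [key xv, key yv]
  calc Nat.card (MulAction.orbitRel.Quotient H α)
      ≤ Nat.card Unit := Nat.card_le_card_of_injective (fun _ => ())
        (fun a b _ => hss a b)
    _ = 1 := Nat.card_unique

lemma exists_perm_two [DecidableEq β] {a b x y : β} (hab : a ≠ b) (hxy : x ≠ y) :
    ∃ σ : Equiv.Perm β, σ a = x ∧ σ b = y := by
  refine ⟨Equiv.swap a x * Equiv.swap b (Equiv.swap a x y), ?_, ?_⟩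
  · rw [Equiv.Perm.mul_apply]
    have hay : a ≠ Equiv.swap a x y := by
      intro hcontra
      apply hxy
      have := congrArg (Equiv.swap a x) hcontra
      rwa [Equiv.swap_apply_left, Equiv.swap_apply_self] at this
    rw [Equiv.swap_apply_of_ne_of_ne hab hay, Equiv.swap_apply_left]
  · rw [Equiv.Perm.mul_apply, Equiv.swap_apply_left, Equiv.swap_apply_self]

end Counting

section Transport

variable {V : Type*} {G : SimpleGraph V}

def dartMap (e : G ≃g G) : Equiv.Perm G.Dart where
  toFun d := ⟨(e d.fst, e d.snd), e.map_adj_iff.mpr d.adj⟩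
  invFun d := ⟨(e.symm d.fst, e.symm d.snd), e.symm.map_adj_iff.mpr d.adj⟩
  left_inv := by rintro ⟨⟨a, b⟩, h⟩; ext <;> simp
  right_inv := by rintro ⟨⟨a, b⟩, h⟩; ext <;> simp

lemma dartMap_fst (e : G ≃g G) (d : G.Dart) : (dartMap e d).fst = e d.fst := rfl

lemma dartMap_inv_fst (e : G ≃g G) (d : G.Dart) :
    ((dartMap e)⁻¹ d).fst = e.symm d.fst := rfl

lemma dartMap_rev_comm (e : G ≃g G) : Commute (dartMap e) (dartRev G) := by
  apply Equiv.ext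
  intro d
  rfl

lemma conj_dartRev (e : G ≃g G) : MulAut.conj (dartMap e) (dartRev G) = dartRev G := by
  rw [MulAut.conj_apply, mul_assoc, ← (dartMap_rev_comm e).inv_left.eq, ← mul_assoc]
  simp

/-- Transport of a rotation system along an automorphism. -/
def conjRS (R : RotSys G) (e : G ≃g G) : RotSys G where
  rot := MulAut.conj (dartMap e) R.rot
  fst_rot d := by
    rw [MulAut.conj_apply, Equiv.Perm.mul_apply, Equiv.Perm.mul_apply, dartMap_fst,
      R.fst_rot, dartMap_inv_fst]
    exact e.apply_symm_apply d.fst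
  orbit_full d d' h := by
    have h2 : ((dartMap e)⁻¹ d).fst = ((dartMap e)⁻¹ d').fst := by
      rw [dartMap_inv_fst, dartMap_inv_fst, h]
    obtain ⟨n, hn⟩ := R.orbit_full _ _ h2
    refine ⟨n, ?_⟩
    have hpow : (MulAut.conj (dartMap e) R.rot) ^ n
        = MulAut.conj (dartMap e) (R.rot ^ n) := (map_pow _ _ _).symm
    rw [hpow, MulAut.conj_apply, Equiv.Perm.mul_apply, Equiv.Perm.mul_apply, hn]
    exact (dartMap e).apply_symm_apply d'

lemma conjRS_facePerm (R : RotSys G) (e : G ≃g G) :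
    (conjRS R e).facePerm = MulAut.conj (dartMap e) R.facePerm := by
  have h1 : (conjRS R e).facePerm = (MulAut.conj (dartMap e) R.rot) * dartRev G := rfl
  have h2 : R.facePerm = R.rot * dartRev G := rfl
  rw [h1, h2, map_mul, conj_dartRev]

lemma conjRS_numFaces (R : RotSys G) (e : G ≃g G) :
    (conjRS R e).numFaces = R.numFaces := by
  unfold RotSys.numFaces
  rw [conjRS_facePerm, show Subgroup.zpowers (MulAut.conj (dartMap e) R.facePerm)
      = (Subgroup.zpowers R.facePerm).map (MulAut.conj (dartMap e)).toMonoidHom by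
        rw [MonoidHom.map_zpowers]; rfl,
    card_quot_conj]

lemma conjRS_numVerts (R : RotSys G) (e : G ≃g G) :
    (conjRS R e).numVerts = R.numVerts := by
  unfold RotSys.numVerts
  rw [show Subgroup.zpowers (conjRS R e).rot
      = (Subgroup.zpowers R.rot).map (MulAut.conj (dartMap e)).toMonoidHom by
        rw [MonoidHom.map_zpowers]; rfl,
    card_quot_conj]

lemma conjRS_numComps (R : RotSys G) (e : G ≃g G) :
    (conjRS R e).numComps = R.numComps := by
  unfold RotSys.numComps
  rw [show ({(conjRS R e).rot, dartRev G} : Set (Equiv.Perm G.Dart))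
      = (MulAut.conj (dartMap e)).toMonoidHom '' {R.rot, dartRev G} by
        rw [Set.image_pair]
        show _ = ({MulAut.conj (dartMap e) R.rot, MulAut.conj (dartMap e) (dartRev G)} : Set _)
        rw [conj_dartRev]
        rfl, ← MonoidHom.map_closure, card_quot_conj]

lemma conjRS_genusLE (R : RotSys G) (e : G ≃g G) {k : ℕ} (h : R.genusLE k) :
    (conjRS R e).genusLE k := by
  unfold RotSys.genusLE at h ⊢
  rwa [conjRS_numFaces, conjRS_numVerts, conjRS_numComps]

lemma conjRS_altFace (R : RotSys G) (e : G ≃g G) {x y : V} (h : R.altFace x y) :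
    (conjRS R e).altFace (e x) (e y) := by
  obtain ⟨d, a, b, c, ha, hab, hbc, hcp, h1, h2, h3, h4⟩ := h
  refine ⟨dartMap e d, a, b, c, ha, hab, hbc, ?_, ?_, ?_, ?_, ?_⟩
  · rwa [conjRS_facePerm, MulAut.conj_apply, minimalPeriod_conj]
  · rw [dartMap_fst, h1]
  all_goals {
    rw [conjRS_facePerm,
      show ∀ n : ℕ, (MulAut.conj (dartMap e) R.facePerm) ^ n
        = MulAut.conj (dartMap e) (R.facePerm ^ n) from fun n => (map_pow _ _ _).symm,
      MulAut.conj_apply, Equiv.Perm.mul_apply, Equiv.Perm.mul_apply,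
      ← Equiv.Perm.mul_apply (dartMap e)⁻¹, inv_mul_cancel, Equiv.Perm.one_apply, dartMap_fst]
    first
      | rw [h2]
      | rw [h3]
      | rw [h4]
  }

lemma AltEmb.transport (e : G ≃g G) {x y : V} {k : ℕ} (h : AltEmb G x y k) :
    AltEmb G (e x) (e y) k := by
  obtain ⟨R, hg, ha⟩ := h
  exact ⟨conjRS R e, conjRS_genusLE R e hg, conjRS_altFace R e ha⟩

end Transport

end AltPaper
namespace AltPaper

/-! ### Concrete toroidal embedding of `K₅` -/

instance : DecidableRel (completeGraph (Fin 5)).Adj :=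
  fun a b => inferInstanceAs (Decidable (a ≠ b))

def nxt5 : Fin 5 → Fin 5 → Fin 5 :=
  ![![1,2,3,4,1], ![2,0,3,4,0], ![1,4,0,0,3], ![2,0,4,0,1], ![1,3,0,2,0]]

def prv5 : Fin 5 → Fin 5 → Fin 5 :=
  ![![1,4,1,2,3], ![4,0,0,2,3], ![3,0,0,4,1], ![1,4,0,0,2], ![2,0,3,1,0]]

lemma nxt5_ne : ∀ u v : Fin 5, u ≠ nxt5 u v := by decide
lemma prv5_ne : ∀ u v : Fin 5, u ≠ prv5 u v := by decide

def rot5 : Equiv.Perm (completeGraph (Fin 5)).Dart where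
  toFun d := ⟨(d.fst, nxt5 d.fst d.snd), nxt5_ne d.fst d.snd⟩
  invFun d := ⟨(d.fst, prv5 d.fst d.snd), prv5_ne d.fst d.snd⟩
  left_inv := fun d => by revert d; decide
  right_inv := fun d => by revert d; decide

def R5 : RotSys (completeGraph (Fin 5)) where
  rot := rot5
  fst_rot := by decide
  orbit_full := fun d d' h => by
    obtain ⟨n, hn⟩ := (by decide :
      ∀ d d' : (completeGraph (Fin 5)).Dart, d.fst = d'.fst →
        ∃ n : Fin 4, (rot5 ^ (n : ℕ)) d = d') d d' h
    exact ⟨n, hn⟩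

def fidx5 : Fin 5 → Fin 5 → Fin 5 :=
  ![![0,0,1,2,1], ![1,0,0,1,3], ![2,1,0,4,0], ![1,3,2,0,4], ![0,1,4,3,0]]

def d05 : (completeGraph (Fin 5)).Dart := ⟨(0, 2), by decide⟩

lemma R5_genus : R5.genusLE 1 := by
  have hE : Nat.card (completeGraph (Fin 5)).edgeSet = 10 := by
    rw [Nat.card_eq_fintype_card]; decide
  have hV : (5 : ℕ) ≤ R5.numVerts := by
    have h := le_card_orbitQuot R5.rot (fun d => d.fst) R5.fst_rot (by decide)
    simpa [RotSys.numVerts] using h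
  have hF : (5 : ℕ) ≤ R5.numFaces := by
    have h := le_card_orbitQuot R5.facePerm (fun d => fidx5 d.fst d.snd)
      (by decide) (by decide)
    simpa [RotSys.numFaces] using h
  have hC : R5.numComps ≤ 1 := by
    refine card_orbitQuot_le_one _ d05 (fun d => ?_)
    have hrot : R5.rot ∈ Subgroup.closure {R5.rot, dartRev (completeGraph (Fin 5))} :=
      Subgroup.subset_closure (Set.mem_insert _ _)
    have hrev : dartRev (completeGraph (Fin 5))
        ∈ Subgroup.closure {R5.rot, dartRev (completeGraph (Fin 5))} :=
      Subgroup.subset_closure (Set.mem_insert_of_mem _ rfl)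
    obtain ⟨a, b, c, hcase⟩ := (by decide :
      ∀ d : (completeGraph (Fin 5)).Dart, ∃ a b c : Fin 5,
        (rot5 ^ (a:ℕ) * dartRev (completeGraph (Fin 5)) * rot5 ^ (b:ℕ) *
          dartRev (completeGraph (Fin 5)) * rot5 ^ (c:ℕ)) d05 = d ∨
        (rot5 ^ (a:ℕ) * dartRev (completeGraph (Fin 5)) * rot5 ^ (c:ℕ)) d05 = d ∨
        (rot5 ^ (a:ℕ)) d05 = d) d
    rcases hcase with h | h | h
    · exact ⟨_, mul_mem (mul_mem (mul_mem (mul_mem (pow_mem hrot a) hrev)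
        (pow_mem hrot b)) hrev) (pow_mem hrot c), h⟩
    · exact ⟨_, mul_mem (mul_mem (pow_mem hrot a) hrev) (pow_mem hrot c), h⟩
    · exact ⟨_, pow_mem hrot a, h⟩
  show 2 * R5.numComps + Nat.card (completeGraph (Fin 5)).edgeSet
      ≤ 2 * 1 + R5.numFaces + R5.numVerts
  omega

lemma R5_period : Function.minimalPeriod (⇑R5.facePerm) d05 = 7 := by
  have hper : Function.IsPeriodicPt (⇑R5.facePerm) 7 d05 :=
    (by decide : (⇑R5.facePerm)^[7] d05 = d05)
  have hsmall : ∀ m < 7, m ∣ 7 → ¬((⇑R5.facePerm)^[m] d05 = d05 ∧ m ≠ 0) := by decide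
  have hpos : 0 < Function.minimalPeriod (⇑R5.facePerm) d05 :=
    Function.minimalPeriod_pos_of_mem_periodicPts
      (Function.mk_mem_periodicPts (by norm_num) hper)
  have hdvd : Function.minimalPeriod (⇑R5.facePerm) d05 ∣ 7 := hper.minimalPeriod_dvd
  have hle : Function.minimalPeriod (⇑R5.facePerm) d05 ≤ 7 :=
    Nat.le_of_dvd (by norm_num) hdvd
  by_contra hne
  exact hsmall _ (lt_of_le_of_ne hle hne) hdvd
    ⟨Function.isPeriodicPt_minimalPeriod _ _, by omega⟩

lemma R5_alt : R5.altFace 0 1 := by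
  refine ⟨d05, 2, 4, 6, by norm_num, by norm_num, by norm_num, ?_, ?_, ?_, ?_, ?_⟩
  · rw [R5_period]; norm_num
  · decide
  · decide
  · decide
  · decide

lemma K5_altEmb : ∀ x y : Fin 5, x ≠ y → AltEmb (completeGraph (Fin 5)) x y 1 := by
  intro x y hxy
  obtain ⟨σ, h0, h1⟩ := exists_perm_two (show (0 : Fin 5) ≠ 1 by decide) hxy
  let e : completeGraph (Fin 5) ≃g completeGraph (Fin 5) :=
    ⟨σ, by intro a b; simp [completeGraph, σ.apply_eq_iff_eq]⟩
  have h := AltEmb.transport e ⟨R5, R5_genus, R5_alt⟩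
  have he0 : e 0 = x := h0
  have he1 : e 1 = y := h1
  rwa [he0, he1] at h

end AltPaper
namespace AltPaper

/-! ### Concrete toroidal embedding of `K₃,₃` -/

instance : DecidableRel (completeBipartiteGraph (Fin 3) (Fin 3)).Adj :=
  fun a b => inferInstanceAs (Decidable (_ ∨ _))

def sLB : Fin 3 → Fin 3 → Fin 3 := ![![1,2,0], ![1,2,0], ![2,0,1]]
def sRB : Fin 3 → Fin 3 → Fin 3 := ![![1,2,0], ![2,0,1], ![1,2,0]]
def pLB : Fin 3 → Fin 3 → Fin 3 := ![![2,0,1], ![2,0,1], ![1,2,0]]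
def pRB : Fin 3 → Fin 3 → Fin 3 := ![![2,0,1], ![1,2,0], ![2,0,1]]

def nxtB : (Fin 3 ⊕ Fin 3) → (Fin 3 ⊕ Fin 3) → (Fin 3 ⊕ Fin 3)
  | Sum.inl i, Sum.inr j => Sum.inr (sLB i j)
  | Sum.inr j, Sum.inl i => Sum.inl (sRB j i)
  | Sum.inl _, Sum.inl _ => Sum.inr 0
  | Sum.inr _, Sum.inr _ => Sum.inl 0

def prvB : (Fin 3 ⊕ Fin 3) → (Fin 3 ⊕ Fin 3) → (Fin 3 ⊕ Fin 3)
  | Sum.inl i, Sum.inr j => Sum.inr (pLB i j)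
  | Sum.inr j, Sum.inl i => Sum.inl (pRB j i)
  | Sum.inl _, Sum.inl _ => Sum.inr 0
  | Sum.inr _, Sum.inr _ => Sum.inl 0

lemma nxtB_adj : ∀ u v : Fin 3 ⊕ Fin 3, (completeBipartiteGraph (Fin 3) (Fin 3)).Adj u v →
    (completeBipartiteGraph (Fin 3) (Fin 3)).Adj u (nxtB u v) := by decide

lemma prvB_adj : ∀ u v : Fin 3 ⊕ Fin 3, (completeBipartiteGraph (Fin 3) (Fin 3)).Adj u v →
    (completeBipartiteGraph (Fin 3) (Fin 3)).Adj u (prvB u v) := by decide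

def rotB : Equiv.Perm (completeBipartiteGraph (Fin 3) (Fin 3)).Dart where
  toFun d := ⟨(d.fst, nxtB d.fst d.snd), nxtB_adj d.fst d.snd d.adj⟩
  invFun d := ⟨(d.fst, prvB d.fst d.snd), prvB_adj d.fst d.snd d.adj⟩
  left_inv := fun d => by revert d; decide
  right_inv := fun d => by revert d; decide

def RB : RotSys (completeBipartiteGraph (Fin 3) (Fin 3)) where
  rot := rotB
  fst_rot := by decide
  orbit_full := fun d d' h => by
    obtain ⟨n, hn⟩ := (by decide :
      ∀ d d' : (completeBipartiteGraph (Fin 3) (Fin 3)).Dart, d.fst = d'.fst →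
        ∃ n : Fin 3, (rotB ^ (n : ℕ)) d = d') d d' h
    exact ⟨n, hn⟩

def fLB : Fin 3 → Fin 3 → Fin 3 := ![![0,1,0], ![0,0,2], ![1,2,0]]
def fRB : Fin 3 → Fin 3 → Fin 3 := ![![1,0,0], ![0,2,1], ![0,0,2]]

def fidxB : (Fin 3 ⊕ Fin 3) → (Fin 3 ⊕ Fin 3) → Fin 3
  | Sum.inl i, Sum.inr j => fLB i j
  | Sum.inr j, Sum.inl i => fRB j i
  | _, _ => 0

def d0B : (completeBipartiteGraph (Fin 3) (Fin 3)).Dart :=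
  ⟨(Sum.inl 0, Sum.inr 0), by decide⟩

lemma RB_genus : RB.genusLE 1 := by
  have hE : Nat.card (completeBipartiteGraph (Fin 3) (Fin 3)).edgeSet = 9 := by
    rw [Nat.card_eq_fintype_card]; decide
  have hV : (6 : ℕ) ≤ RB.numVerts := by
    have h := le_card_orbitQuot RB.rot (fun d => d.fst) RB.fst_rot (by decide)
    have h6 : Nat.card (Fin 3 ⊕ Fin 3) = 6 := by
      rw [Nat.card_eq_fintype_card]; decide
    rwa [h6] at h
  have hF : (3 : ℕ) ≤ RB.numFaces := by
    have h := le_card_orbitQuot RB.facePerm (fun d => fidxB d.fst d.snd)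
      (by decide) (by decide)
    simpa [RotSys.numFaces] using h
  have hC : RB.numComps ≤ 1 := by
    refine card_orbitQuot_le_one _ d0B (fun d => ?_)
    have hrot : RB.rot ∈ Subgroup.closure
        {RB.rot, dartRev (completeBipartiteGraph (Fin 3) (Fin 3))} :=
      Subgroup.subset_closure (Set.mem_insert _ _)
    have hrev : dartRev (completeBipartiteGraph (Fin 3) (Fin 3))
        ∈ Subgroup.closure {RB.rot, dartRev (completeBipartiteGraph (Fin 3) (Fin 3))} :=
      Subgroup.subset_closure (Set.mem_insert_of_mem _ rfl)
    obtain ⟨a, b, c, hcase⟩ := (by decide :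
      ∀ d : (completeBipartiteGraph (Fin 3) (Fin 3)).Dart, ∃ a b c : Fin 3,
        (rotB ^ (a:ℕ) * dartRev (completeBipartiteGraph (Fin 3) (Fin 3)) * rotB ^ (b:ℕ) *
          dartRev (completeBipartiteGraph (Fin 3) (Fin 3)) * rotB ^ (c:ℕ)) d0B = d ∨
        (rotB ^ (a:ℕ) * dartRev (completeBipartiteGraph (Fin 3) (Fin 3)) * rotB ^ (c:ℕ))
          d0B = d ∨
        (rotB ^ (a:ℕ)) d0B = d) d
    rcases hcase with h | h | h
    · exact ⟨_, mul_mem (mul_mem (mul_mem (mul_mem (pow_mem hrot a) hrev)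
        (pow_mem hrot b)) hrev) (pow_mem hrot c), h⟩
    · exact ⟨_, mul_mem (mul_mem (pow_mem hrot a) hrev) (pow_mem hrot c), h⟩
    · exact ⟨_, pow_mem hrot a, h⟩
  show 2 * RB.numComps + Nat.card (completeBipartiteGraph (Fin 3) (Fin 3)).edgeSet
      ≤ 2 * 1 + RB.numFaces + RB.numVerts
  omega

lemma RB_period : Function.minimalPeriod (⇑RB.facePerm) d0B = 10 := by
  have hper : Function.IsPeriodicPt (⇑RB.facePerm) 10 d0B :=
    (by decide : (⇑RB.facePerm)^[10] d0B = d0B)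
  have hsmall : ∀ m < 10, m ∣ 10 → ¬((⇑RB.facePerm)^[m] d0B = d0B ∧ m ≠ 0) := by decide
  have hpos : 0 < Function.minimalPeriod (⇑RB.facePerm) d0B :=
    Function.minimalPeriod_pos_of_mem_periodicPts
      (Function.mk_mem_periodicPts (by norm_num) hper)
  have hdvd : Function.minimalPeriod (⇑RB.facePerm) d0B ∣ 10 := hper.minimalPeriod_dvd
  have hle : Function.minimalPeriod (⇑RB.facePerm) d0B ≤ 10 :=
    Nat.le_of_dvd (by norm_num) hdvd
  by_contra hne
  exact hsmall _ (lt_of_le_of_ne hle hne) hdvd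
    ⟨Function.isPeriodicPt_minimalPeriod _ _, by omega⟩

lemma RB_alt_LL : RB.altFace (Sum.inl 0) (Sum.inl 1) := by
  refine ⟨d0B, 2, 4, 6, by norm_num, by norm_num, by norm_num, ?_, ?_, ?_, ?_, ?_⟩
  · rw [RB_period]; norm_num
  · decide
  · decide
  · decide
  · decide

lemma RB_alt_LR : RB.altFace (Sum.inl 0) (Sum.inr 0) := by
  refine ⟨d0B, 1, 4, 7, by norm_num, by norm_num, by norm_num, ?_, ?_, ?_, ?_, ?_⟩
  · rw [RB_period]; norm_num
  · decide
  · decide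
  · decide
  · decide

def bipIso (σ τ : Equiv.Perm (Fin 3)) :
    completeBipartiteGraph (Fin 3) (Fin 3) ≃g completeBipartiteGraph (Fin 3) (Fin 3) :=
  ⟨Equiv.sumCongr σ τ, by
    intro a b
    rcases a with a | a <;> rcases b with b | b <;>
      simp [completeBipartiteGraph]⟩

def commIso :
    completeBipartiteGraph (Fin 3) (Fin 3) ≃g completeBipartiteGraph (Fin 3) (Fin 3) :=
  ⟨Equiv.sumComm (Fin 3) (Fin 3), by
    intro a b
    rcases a with a | a <;> rcases b with b | b <;>
      simp [completeBipartiteGraph]⟩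

lemma K33_altEmb : ∀ x y : Fin 3 ⊕ Fin 3, x ≠ y →
    AltEmb (completeBipartiteGraph (Fin 3) (Fin 3)) x y 1 := by
  have baseLL : AltEmb (completeBipartiteGraph (Fin 3) (Fin 3)) (Sum.inl 0) (Sum.inl 1) 1 :=
    ⟨RB, RB_genus, RB_alt_LL⟩
  have baseLR : AltEmb (completeBipartiteGraph (Fin 3) (Fin 3)) (Sum.inl 0) (Sum.inr 0) 1 :=
    ⟨RB, RB_genus, RB_alt_LR⟩
  rintro (i | i) (j | j) hxy
  · have hij : i ≠ j := fun h => hxy (by rw [h])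
    obtain ⟨σ, h0, h1⟩ := exists_perm_two (show (0 : Fin 3) ≠ 1 by decide) hij
    have h := AltEmb.transport (bipIso σ 1) baseLL
    have e0 : (bipIso σ 1) (Sum.inl 0) = Sum.inl i := by simp [bipIso, h0]
    have e1 : (bipIso σ 1) (Sum.inl 1) = Sum.inl j := by simp [bipIso, h1]
    rwa [e0, e1] at h
  · have h := AltEmb.transport (bipIso (Equiv.swap 0 i) (Equiv.swap 0 j)) baseLR
    have e0 : (bipIso (Equiv.swap 0 i) (Equiv.swap 0 j)) (Sum.inl 0) = Sum.inl i := by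
      simp [bipIso]
    have e1 : (bipIso (Equiv.swap 0 i) (Equiv.swap 0 j)) (Sum.inr 0) = Sum.inr j := by
      simp [bipIso]
    rwa [e0, e1] at h
  · have h := AltEmb.transport ((bipIso (Equiv.swap 0 i) (Equiv.swap 0 j)).trans commIso)
      baseLR
    have e0 : ((bipIso (Equiv.swap 0 i) (Equiv.swap 0 j)).trans commIso) (Sum.inl 0)
        = Sum.inr i := by simp [bipIso, commIso]
    have e1 : ((bipIso (Equiv.swap 0 i) (Equiv.swap 0 j)).trans commIso) (Sum.inr 0)
        = Sum.inl j := by simp [bipIso, commIso]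
    rwa [e0, e1] at h
  · have hij : i ≠ j := fun h => hxy (by rw [h])
    obtain ⟨σ, h0, h1⟩ := exists_perm_two (show (0 : Fin 3) ≠ 1 by decide) hij
    have h := AltEmb.transport ((bipIso σ 1).trans commIso) baseLL
    have e0 : ((bipIso σ 1).trans commIso) (Sum.inl 0) = Sum.inr i := by
      simp [bipIso, commIso, h0]
    have e1 : ((bipIso σ 1).trans commIso) (Sum.inl 1) = Sum.inr j := by
      simp [bipIso, commIso, h1]
    rwa [e0, e1] at h

end AltPaper

open AltPaper in
/-- Both `K₅` and `K₃,₃` admit embeddings in the torus in which, for any pair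
of distinct vertices `x, y`, some face contains `x` and `y` twice in alternating cyclic
order. -/
theorem statement_9 :
    (∀ x y : Fin 5, x ≠ y → AltEmb (completeGraph (Fin 5)) x y 1) ∧
    (∀ x y : Fin 3 ⊕ Fin 3, x ≠ y →
      AltEmb (completeBipartiteGraph (Fin 3) (Fin 3)) x y 1) := by
  exact ⟨K5_altEmb, K33_altEmb⟩
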